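/- Let λ > 0. There exists C = C(λ) > 0 such that for all t, y > 0, ∫₀^∞ x y P_t^{[λ+1]}(x,y) x^{2λ} dx ≤ C, where P_t^{[λ+1]} is the Bessel Poisson kernel of order λ+1. -/

import Mathlib

noncomputable section
open MeasureTheory Set

/-- The Bessel Poisson kernel `P_t^{[μ]}(x,y)` of order `μ`. -/
def besselP (mu t x y : ℝ) : ℝ :=
  (2 * mu * t / Real.pi) * ∫ θ in Ioo (0 : ℝ) Real.pi,
    (Real.sin θ) ^ (2 * mu - 1) / (x ^ 2 + y ^ 2 + t ^ 2 - 2 * x * y * Real.cos θ) ^ (mu + 1)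

open Real

section Helpers

/-- Integral of the Poisson-type kernel over the line. -/
lemma poisson_integrable {t : ℝ} (ht : 0 < t) (y : ℝ) :
    Integrable (fun x : ℝ => t / ((x - y) ^ 2 + t ^ 2)) := by
  have h1 : (fun x : ℝ => t / ((x - y) ^ 2 + t ^ 2))
      = fun x : ℝ => t⁻¹ * ((fun u : ℝ => (1 + u ^ 2)⁻¹) ((x - y) / t)) := by
    funext x
    have h : (x - y) ^ 2 + t ^ 2 ≠ 0 := by positivity
    field_simp
    ring
  rw [h1]
  exact (((integrable_inv_one_add_sq).comp_div ht.ne').comp_sub_right y).const_mul _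

lemma poisson_integral {t : ℝ} (ht : 0 < t) (y : ℝ) :
    ∫ x : ℝ, t / ((x - y) ^ 2 + t ^ 2) = Real.pi := by
  have h1 : (fun x : ℝ => t / ((x - y) ^ 2 + t ^ 2))
      = fun x : ℝ => t⁻¹ * ((fun u : ℝ => (1 + u ^ 2)⁻¹) ((x - y) / t)) := by
    funext x
    have h : (x - y) ^ 2 + t ^ 2 ≠ 0 := by positivity
    field_simp
    ring
  rw [h1, MeasureTheory.integral_const_mul]
  have h2 : ∫ x : ℝ, (fun u : ℝ => (1 + ((u : ℝ)) ^ 2)⁻¹) ((x - y) / t)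
      = ∫ x : ℝ, (fun v : ℝ => (1 + (v / t) ^ 2)⁻¹) (x - y) := by rfl
  rw [h2, MeasureTheory.integral_sub_right_eq_self (fun v : ℝ => (1 + (v / t) ^ 2)⁻¹) y]
  rw [MeasureTheory.Measure.integral_comp_div (fun u : ℝ => (1 + u ^ 2)⁻¹) t]
  rw [integral_univ_inv_one_add_sq, smul_eq_mul, abs_of_pos ht]
  field_simp

lemma g_meas (lam A B : ℝ) :
    Measurable (fun θ : ℝ => θ ^ (2 * lam + 1) / (A + B * θ ^ 2) ^ (lam + 2)) := by
  fun_prop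

lemma g_integrableOn {lam A B : ℝ} (hlam : 0 < lam) (hA : 0 < A) (hB : 0 < B) :
    IntegrableOn (fun θ : ℝ => θ ^ (2 * lam + 1) / (A + B * θ ^ 2) ^ (lam + 2)) (Ioi 0) := by
  rw [← Ioc_union_Ioi_eq_Ioi (le_of_lt one_pos)]
  apply IntegrableOn.union
  · -- bounded on (0,1]
    apply Integrable.mono' (integrableOn_const (C := (A ^ (lam + 2))⁻¹) measure_Ioc_lt_top.ne)
      ((g_meas lam A B).aestronglyMeasurable.restrict)
    filter_upwards [ae_restrict_mem measurableSet_Ioc] with θ hθ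
    have hθ0 : 0 < θ := hθ.1
    have h1 : θ ^ (2 * lam + 1) ≤ 1 := by
      apply Real.rpow_le_one hθ0.le hθ.2 (by linarith)
    have h2 : (A : ℝ) ^ (lam + 2) ≤ (A + B * θ ^ 2) ^ (lam + 2) := by
      apply Real.rpow_le_rpow hA.le (by nlinarith) (by linarith)
    have h3 : (0:ℝ) < (A + B * θ ^ 2) ^ (lam + 2) := by
      apply Real.rpow_pos_of_pos; nlinarith
    rw [Real.norm_eq_abs, abs_of_nonneg (by positivity)]
    calc θ ^ (2 * lam + 1) / (A + B * θ ^ 2) ^ (lam + 2)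
        ≤ 1 / A ^ (lam + 2) := by
          apply div_le_div₀ (by positivity) h1 (Real.rpow_pos_of_pos hA _) h2
      _ = (A ^ (lam + 2))⁻¹ := one_div _
  · -- dominated by θ^(-3) on (1,∞)
    apply Integrable.mono' (((integrableOn_Ioi_rpow_of_lt (show (-3:ℝ) < -1 by norm_num)
        one_pos).const_mul ((B ^ (lam + 2))⁻¹)))
      ((g_meas lam A B).aestronglyMeasurable.restrict)
    filter_upwards [ae_restrict_mem measurableSet_Ioi] with θ hθ
    have hθ1 : (1:ℝ) < θ := hθ
    have hθ0 : (0:ℝ) < θ := by linarith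
    have hden : (B * θ ^ 2) ^ (lam + 2) ≤ (A + B * θ ^ 2) ^ (lam + 2) := by
      apply Real.rpow_le_rpow (by positivity) (by nlinarith) (by linarith)
    have hBθ : (B * θ ^ 2) ^ (lam + 2) = B ^ (lam + 2) * θ ^ (2 * (lam + 2)) := by
      rw [Real.mul_rpow hB.le (by positivity), ← Real.rpow_natCast θ 2, ← Real.rpow_mul hθ0.le]
      norm_num
    rw [Real.norm_eq_abs, abs_of_nonneg (by positivity)]
    calc θ ^ (2 * lam + 1) / (A + B * θ ^ 2) ^ (lam + 2)
        ≤ θ ^ (2 * lam + 1) / (B * θ ^ 2) ^ (lam + 2) := by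
          apply div_le_div_of_nonneg_left (by positivity) (by positivity) hden
      _ = (B ^ (lam + 2))⁻¹ * θ ^ (-3 : ℝ) := by
          rw [hBθ, show (-3:ℝ) = (2 * lam + 1) - (2 * (lam + 2)) by ring,
            Real.rpow_sub hθ0]
          field_simp




lemma g_integral_le {lam A B : ℝ} (hlam : 0 < lam) (hA : 0 < A) (hB : 0 < B) :
    ∫ θ in Ioi (0:ℝ), θ ^ (2 * lam + 1) / (A + B * θ ^ 2) ^ (lam + 2)
      ≤ A⁻¹ * B ^ (-(lam + 1)) := by
  set θ₀ := Real.sqrt (A / B) with hθ₀def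
  have hAB : 0 < A / B := div_pos hA hB
  have hθ₀ : 0 < θ₀ := Real.sqrt_pos.2 hAB
  have hsq : θ₀ ^ 2 = A / B := Real.sq_sqrt hAB.le
  have hint := g_integrableOn hlam hA hB
  have hint1 : IntegrableOn (fun θ : ℝ => θ ^ (2 * lam + 1) / (A + B * θ ^ 2) ^ (lam + 2))
      (Ioc 0 θ₀) := hint.mono_set Ioc_subset_Ioi_self
  have hint2 : IntegrableOn (fun θ : ℝ => θ ^ (2 * lam + 1) / (A + B * θ ^ 2) ^ (lam + 2))
      (Ioi θ₀) := hint.mono_set (Ioi_subset_Ioi hθ₀.le)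
  -- split
  rw [← Ioc_union_Ioi_eq_Ioi hθ₀.le,
    setIntegral_union Ioc_disjoint_Ioi_same measurableSet_Ioi hint1 hint2]
  -- first piece
  have hb1 : IntegrableOn (fun θ : ℝ => θ ^ (2 * lam + 1) * (A ^ (lam + 2))⁻¹) (Ioc 0 θ₀) := by
    exact ((intervalIntegrable_iff_integrableOn_Ioc_of_le hθ₀.le).1
      (intervalIntegral.intervalIntegrable_rpow' (by linarith))).mul_const _
  have h1 : ∫ θ in Ioc (0:ℝ) θ₀, θ ^ (2 * lam + 1) / (A + B * θ ^ 2) ^ (lam + 2)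
      ≤ ∫ θ in Ioc (0:ℝ) θ₀, θ ^ (2 * lam + 1) * (A ^ (lam + 2))⁻¹ := by
    apply setIntegral_mono_on hint1 hb1 measurableSet_Ioc
    intro θ hθ
    have hθ0 : 0 < θ := hθ.1
    have h2 : (A : ℝ) ^ (lam + 2) ≤ (A + B * θ ^ 2) ^ (lam + 2) :=
      Real.rpow_le_rpow hA.le (by nlinarith) (by linarith)
    rw [div_eq_mul_inv]
    exact mul_le_mul_of_nonneg_left (inv_anti₀ (Real.rpow_pos_of_pos hA _) h2)
      (by positivity)
  have e1 : ∫ θ in Ioc (0:ℝ) θ₀, θ ^ (2 * lam + 1) * (A ^ (lam + 2))⁻¹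
      = (θ₀ ^ (2 * lam + 2) / (2 * lam + 2)) * (A ^ (lam + 2))⁻¹ := by
    rw [MeasureTheory.integral_mul_const, ← intervalIntegral.integral_of_le hθ₀.le,
      integral_rpow (Or.inl (by linarith)),
      Real.zero_rpow (by positivity : (2 * lam + 1 + 1) ≠ 0)]
    ring_nf
  -- second piece
  have hb2 : IntegrableOn (fun θ : ℝ => (B ^ (lam + 2))⁻¹ * θ ^ (-3:ℝ)) (Ioi θ₀) :=
    (integrableOn_Ioi_rpow_of_lt (by norm_num) hθ₀).const_mul _
  have h2 : ∫ θ in Ioi θ₀, θ ^ (2 * lam + 1) / (A + B * θ ^ 2) ^ (lam + 2)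
      ≤ ∫ θ in Ioi θ₀, (B ^ (lam + 2))⁻¹ * θ ^ (-3:ℝ) := by
    apply setIntegral_mono_on hint2 hb2 measurableSet_Ioi
    intro θ hθ
    have hθ0 : 0 < θ := lt_trans hθ₀ hθ
    have hden : (B * θ ^ 2) ^ (lam + 2) ≤ (A + B * θ ^ 2) ^ (lam + 2) :=
      Real.rpow_le_rpow (by positivity) (by nlinarith) (by linarith)
    have hBθ : (B * θ ^ 2) ^ (lam + 2) = B ^ (lam + 2) * θ ^ (2 * (lam + 2)) := by
      rw [Real.mul_rpow hB.le (by positivity), ← Real.rpow_natCast θ 2, ← Real.rpow_mul hθ0.le]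
      norm_num
    calc θ ^ (2 * lam + 1) / (A + B * θ ^ 2) ^ (lam + 2)
        ≤ θ ^ (2 * lam + 1) / (B * θ ^ 2) ^ (lam + 2) := by
          apply div_le_div_of_nonneg_left (by positivity) (by positivity) hden
      _ = (B ^ (lam + 2))⁻¹ * θ ^ (-3:ℝ) := by
          rw [hBθ, show (-3:ℝ) = (2 * lam + 1) - (2 * (lam + 2)) by ring,
            Real.rpow_sub hθ0]
          field_simp
  have e2 : ∫ θ in Ioi θ₀, (B ^ (lam + 2))⁻¹ * θ ^ (-3:ℝ)
      = (B ^ (lam + 2))⁻¹ * (θ₀ ^ (-2:ℝ) / 2) := by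
    rw [MeasureTheory.integral_const_mul, integral_Ioi_rpow_of_lt (by norm_num) hθ₀]
    norm_num
  -- combine
  have hrpow2 : θ₀ ^ (2:ℝ) = A / B := by
    rw [← Real.rpow_natCast θ₀ 2] at hsq
    simpa using hsq
  have hθ₀pow : θ₀ ^ (2 * lam + 2) = A ^ (lam + 1) * (B ^ (lam + 1))⁻¹ := by
    rw [show (2 * lam + 2 : ℝ) = 2 * (lam + 1) by ring, Real.rpow_mul hθ₀.le, hrpow2,
      Real.div_rpow hA.le hB.le, div_eq_mul_inv]
  have hθ₀neg2 : θ₀ ^ (-2:ℝ) = B * A⁻¹ := by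
    rw [show (-2:ℝ) = -(2:ℝ) by norm_num, Real.rpow_neg hθ₀.le, hrpow2]
    rw [inv_div, div_eq_mul_inv]
  have hA2 : A ^ (lam + 2) = A ^ (lam + 1) * A := by
    rw [show (lam + 2 : ℝ) = (lam + 1) + 1 by ring, Real.rpow_add hA, Real.rpow_one]
  have hB2 : B ^ (lam + 2) = B ^ (lam + 1) * B := by
    rw [show (lam + 2 : ℝ) = (lam + 1) + 1 by ring, Real.rpow_add hB, Real.rpow_one]
  have hBneg : B ^ (-(lam + 1)) = (B ^ (lam + 1))⁻¹ := by
    rw [Real.rpow_neg hB.le]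
  have ha1 : (0:ℝ) < A ^ (lam + 1) := Real.rpow_pos_of_pos hA _
  have hb1 : (0:ℝ) < B ^ (lam + 1) := Real.rpow_pos_of_pos hB _
  rw [hBneg]
  calc (∫ θ in Ioc (0:ℝ) θ₀, θ ^ (2 * lam + 1) / (A + B * θ ^ 2) ^ (lam + 2))
        + ∫ θ in Ioi θ₀, θ ^ (2 * lam + 1) / (A + B * θ ^ 2) ^ (lam + 2)
      ≤ (θ₀ ^ (2 * lam + 2) / (2 * lam + 2)) * (A ^ (lam + 2))⁻¹
        + (B ^ (lam + 2))⁻¹ * (θ₀ ^ (-2:ℝ) / 2) := by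
        rw [← e1, ← e2]; exact add_le_add h1 h2
    _ = A⁻¹ * (B ^ (lam + 1))⁻¹ * (1 / (2 * lam + 2) + 1 / 2) := by
        rw [hθ₀pow, hθ₀neg2, hA2, hB2]
        field_simp
    _ ≤ A⁻¹ * (B ^ (lam + 1))⁻¹ * 1 := by
        apply mul_le_mul_of_nonneg_left _ (by positivity)
        have h12 : (1:ℝ) / (2 * lam + 2) ≤ 1 / 2 :=
          one_div_le_one_div_of_le (by norm_num) (by linarith)
        linarith
    _ = A⁻¹ * (B ^ (lam + 1))⁻¹ := mul_one _

section S2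
variable {lam t x y : ℝ}






variable {lam t x y : ℝ}

lemma denom_lb (hx : 0 < x) (hy : 0 < y) {θ : ℝ} (hθ : θ ∈ Ioo (0:ℝ) π) :
    ((x - y) ^ 2 + t ^ 2) + (4 * x * y / π ^ 2) * θ ^ 2
      ≤ x ^ 2 + y ^ 2 + t ^ 2 - 2 * x * y * Real.cos θ := by
  have hcos : Real.cos θ ≤ 1 - 2 / π ^ 2 * θ ^ 2 :=
    Real.cos_le_one_sub_mul_cos_sq (by rw [abs_of_pos hθ.1]; exact hθ.2.le)
  have hπ : (0:ℝ) < π ^ 2 := by positivity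
  have hxy : 0 < x * y := mul_pos hx hy
  have h := mul_le_mul_of_nonneg_left hcos (le_of_lt (by positivity : (0:ℝ) < 2 * (x * y)))
  have h2 : 2 * (x * y) * (1 - 2 / π ^ 2 * θ ^ 2) = 2 * x * y - 4 * x * y / π ^ 2 * θ ^ 2 := by
    ring
  have h3 : x ^ 2 + y ^ 2 = (x - y) ^ 2 + 2 * x * y := by ring
  have h4 : 2 * (x * y) * Real.cos θ = 2 * x * y * Real.cos θ := by ring
  linarith

lemma inner_le_one (hlam : 0 < lam) (ht : 0 < t) (hx : 0 < x) (hy : 0 < y) :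
    ∫ θ in Ioo (0:ℝ) π,
        Real.sin θ ^ (2 * lam + 1) / (x ^ 2 + y ^ 2 + t ^ 2 - 2 * x * y * Real.cos θ) ^ (lam + 2)
      ≤ ((x - y) ^ 2 + t ^ 2)⁻¹ * (4 * x * y / π ^ 2) ^ (-(lam + 1)) := by
  set A := (x - y) ^ 2 + t ^ 2 with hAdef
  set B := 4 * x * y / π ^ 2 with hBdef
  have hA : 0 < A := by positivity
  have hB : 0 < B := by positivity
  have hgi := g_integrableOn (A := A) (B := B) hlam hA hB
  calc ∫ θ in Ioo (0:ℝ) π,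
          Real.sin θ ^ (2 * lam + 1) / (x ^ 2 + y ^ 2 + t ^ 2 - 2 * x * y * Real.cos θ) ^ (lam + 2)
      ≤ ∫ θ in Ioo (0:ℝ) π, θ ^ (2 * lam + 1) / (A + B * θ ^ 2) ^ (lam + 2) := by
        apply integral_mono_of_nonneg
        · filter_upwards [ae_restrict_mem measurableSet_Ioo] with θ hθ
          have h1 : (0:ℝ) ≤ Real.sin θ := Real.sin_nonneg_of_nonneg_of_le_pi hθ.1.le hθ.2.le
          have hD : (0:ℝ) < x ^ 2 + y ^ 2 + t ^ 2 - 2 * x * y * Real.cos θ :=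
            lt_of_lt_of_le (by positivity) (denom_lb hx hy hθ)
          positivity
        · exact hgi.mono_set Ioo_subset_Ioi_self
        · filter_upwards [ae_restrict_mem measurableSet_Ioo] with θ hθ
          have h1 : (0:ℝ) ≤ Real.sin θ := Real.sin_nonneg_of_nonneg_of_le_pi hθ.1.le hθ.2.le
          have hle := denom_lb (t := t) hx hy hθ
          have hden : (0:ℝ) < A + B * θ ^ 2 := by positivity
          apply div_le_div₀ (Real.rpow_nonneg hθ.1.le _)
            (Real.rpow_le_rpow h1 (Real.sin_le hθ.1.le) (by linarith))
            (Real.rpow_pos_of_pos hden _)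
            (Real.rpow_le_rpow hden.le hle (by linarith))
    _ ≤ ∫ θ in Ioi (0:ℝ), θ ^ (2 * lam + 1) / (A + B * θ ^ 2) ^ (lam + 2) := by
        apply setIntegral_mono_set hgi
        · filter_upwards [ae_restrict_mem measurableSet_Ioi] with θ hθ
          have hθ0 : (0:ℝ) < θ := hθ
          positivity
        · exact HasSubset.Subset.eventuallyLE Ioo_subset_Ioi_self
    _ ≤ A⁻¹ * B ^ (-(lam + 1)) := g_integral_le hlam hA hB

lemma inner_le_two (hlam : 0 < lam) (ht : 0 < t) (hx : 0 < x) (hy : 0 < y) :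
    ∫ θ in Ioo (0:ℝ) π,
        Real.sin θ ^ (2 * lam + 1) / (x ^ 2 + y ^ 2 + t ^ 2 - 2 * x * y * Real.cos θ) ^ (lam + 2)
      ≤ ((x - y) ^ 2 + t ^ 2) ^ (-(lam + 1)) * (4 * x * y / π ^ 2)⁻¹ * (π ^ (2 * lam) / (2 * lam)) := by
  set A := (x - y) ^ 2 + t ^ 2 with hAdef
  set B := 4 * x * y / π ^ 2 with hBdef
  have hA : 0 < A := by positivity
  have hB : 0 < B := by positivity
  have hA1 : (0:ℝ) < A ^ (lam + 1) := Real.rpow_pos_of_pos hA _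
  have hbint : IntegrableOn (fun θ : ℝ => θ ^ (2 * lam - 1) * (A ^ (lam + 1) * B)⁻¹)
      (Ioo 0 π) := by
    apply IntegrableOn.mono_set _ Ioo_subset_Ioc_self
    exact ((intervalIntegrable_iff_integrableOn_Ioc_of_le Real.pi_pos.le).1
      (intervalIntegral.intervalIntegrable_rpow' (by linarith))).mul_const _
  calc ∫ θ in Ioo (0:ℝ) π,
          Real.sin θ ^ (2 * lam + 1) / (x ^ 2 + y ^ 2 + t ^ 2 - 2 * x * y * Real.cos θ) ^ (lam + 2)
      ≤ ∫ θ in Ioo (0:ℝ) π, θ ^ (2 * lam - 1) * (A ^ (lam + 1) * B)⁻¹ := by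
        apply integral_mono_of_nonneg
        · filter_upwards [ae_restrict_mem measurableSet_Ioo] with θ hθ
          have h1 : (0:ℝ) ≤ Real.sin θ := Real.sin_nonneg_of_nonneg_of_le_pi hθ.1.le hθ.2.le
          have hD : (0:ℝ) < x ^ 2 + y ^ 2 + t ^ 2 - 2 * x * y * Real.cos θ :=
            lt_of_lt_of_le (by positivity) (denom_lb hx hy hθ)
          positivity
        · exact hbint
        · filter_upwards [ae_restrict_mem measurableSet_Ioo] with θ hθ
          have hθ0 : (0:ℝ) < θ := hθ.1
          have h1 : (0:ℝ) ≤ Real.sin θ := Real.sin_nonneg_of_nonneg_of_le_pi hθ.1.le hθ.2.le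
          have hle := denom_lb (t := t) hx hy hθ
          have hD : (0:ℝ) < x ^ 2 + y ^ 2 + t ^ 2 - 2 * x * y * Real.cos θ :=
            lt_of_lt_of_le (by positivity) hle
          have hsplit : A ^ (lam + 1) * (B * θ ^ 2)
              ≤ (x ^ 2 + y ^ 2 + t ^ 2 - 2 * x * y * Real.cos θ) ^ (lam + 2) := by
            rw [show (lam + 2 : ℝ) = (lam + 1) + 1 by ring, Real.rpow_add hD, Real.rpow_one]
            apply mul_le_mul
            · exact Real.rpow_le_rpow hA.le (by nlinarith) (by linarith)
            · nlinarith
            · positivity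
            · positivity
          calc Real.sin θ ^ (2 * lam + 1)
                  / (x ^ 2 + y ^ 2 + t ^ 2 - 2 * x * y * Real.cos θ) ^ (lam + 2)
              ≤ θ ^ (2 * lam + 1) / (A ^ (lam + 1) * (B * θ ^ 2)) := by
                apply div_le_div₀ (Real.rpow_nonneg hθ.1.le _)
                  (Real.rpow_le_rpow h1 (Real.sin_le hθ.1.le) (by linarith))
                  (by positivity) hsplit
            _ = θ ^ (2 * lam - 1) * (A ^ (lam + 1) * B)⁻¹ := by
                have hθpow : θ ^ (2 * lam + 1) = θ ^ (2 * lam - 1) * θ ^ 2 := by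
                  rw [show (2 * lam + 1 : ℝ) = (2 * lam - 1) + 2 by ring,
                    Real.rpow_add hθ.1, ← Real.rpow_natCast θ 2]
                  norm_num
                rw [hθpow]
                have hθ2 : (0:ℝ) < θ ^ 2 := by positivity
                field_simp
    _ = (π ^ (2 * lam) / (2 * lam)) * (A ^ (lam + 1) * B)⁻¹ := by
        rw [← MeasureTheory.integral_Ioc_eq_integral_Ioo, MeasureTheory.integral_mul_const,
          ← intervalIntegral.integral_of_le Real.pi_pos.le,
          integral_rpow (Or.inl (by linarith)),
          Real.zero_rpow (ne_of_gt (by linarith : (0:ℝ) < 2 * lam - 1 + 1))]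
        ring_nf
    _ = A ^ (-(lam + 1)) * B⁻¹ * (π ^ (2 * lam) / (2 * lam)) := by
        rw [Real.rpow_neg hA.le, mul_inv]
        ring

variable {lam t x y : ℝ}







lemma besselP_eq :
    besselP (lam + 1) t x y = (2 * (lam + 1) * t / π) * ∫ θ in Ioo (0:ℝ) π,
      Real.sin θ ^ (2 * lam + 1)
        / (x ^ 2 + y ^ 2 + t ^ 2 - 2 * x * y * Real.cos θ) ^ (lam + 2) := by
  unfold besselP
  rw [show 2 * (lam + 1) - 1 = 2 * lam + 1 by ring, show lam + 1 + 1 = lam + 2 by ring]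

lemma besselP_nonneg (hlam : 0 < lam) (ht : 0 < t) (hx : 0 < x) (hy : 0 < y) :
    0 ≤ besselP (lam + 1) t x y := by
  rw [besselP_eq]
  apply mul_nonneg (by positivity)
  apply setIntegral_nonneg measurableSet_Ioo
  intro θ hθ
  have h1 : (0:ℝ) ≤ Real.sin θ := Real.sin_nonneg_of_nonneg_of_le_pi hθ.1.le hθ.2.le
  have hD : (0:ℝ) < x ^ 2 + y ^ 2 + t ^ 2 - 2 * x * y * Real.cos θ :=
    lt_of_lt_of_le (by positivity) (denom_lb hx hy hθ)
  positivity

lemma case_one (hlam : 0 < lam) (ht : 0 < t) (hx : 0 < x) (hy : 0 < y) (hxy : x ≤ 2 * y) :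
    x * y * besselP (lam + 1) t x y * x ^ (2 * lam)
      ≤ ((2 * (lam + 1) / π) * ((4 / π ^ 2) ^ (lam + 1))⁻¹ * 2 ^ lam)
        * (t / ((x - y) ^ 2 + t ^ 2)) := by
  set A := (x - y) ^ 2 + t ^ 2 with hAdef
  set B := 4 * x * y / π ^ 2 with hBdef
  have hA : 0 < A := by positivity
  have hB : 0 < B := by positivity
  have hP : besselP (lam + 1) t x y ≤ (2 * (lam + 1) * t / π) * (A⁻¹ * B ^ (-(lam + 1))) := by
    rw [besselP_eq]
    exact mul_le_mul_of_nonneg_left (inner_le_one hlam ht hx hy) (by positivity)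
  have step1 : x * y * besselP (lam + 1) t x y * x ^ (2 * lam)
      ≤ x * y * ((2 * (lam + 1) * t / π) * (A⁻¹ * B ^ (-(lam + 1)))) * x ^ (2 * lam) := by
    have hxl : (0:ℝ) ≤ x ^ (2 * lam) := Real.rpow_nonneg hx.le _
    have := mul_le_mul_of_nonneg_left hP (by positivity : (0:ℝ) ≤ x * y)
    exact mul_le_mul_of_nonneg_right this hxl
  refine step1.trans ?_
  have hB1 : B ^ (lam + 1) = (4 / π ^ 2) ^ (lam + 1) * ((x ^ lam * x) * (y ^ lam * y)) := by
    rw [show B = 4 / π ^ 2 * (x * y) by rw [hBdef]; ring,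
      Real.mul_rpow (by positivity) (by positivity),
      Real.mul_rpow hx.le hy.le]
    congr 1
    congr 1
    · rw [Real.rpow_add hx, Real.rpow_one]
    · rw [Real.rpow_add hy, Real.rpow_one]
  have hx2 : x ^ (2 * lam) = x ^ lam * x ^ lam := by
    rw [← Real.rpow_add hx]; ring_nf
  have key : x * y * ((2 * (lam + 1) * t / π) * (A⁻¹ * B ^ (-(lam + 1)))) * x ^ (2 * lam)
      = (2 * (lam + 1) / π) * ((4 / π ^ 2) ^ (lam + 1))⁻¹ * (x ^ lam * (y ^ lam)⁻¹)
        * (t / A) := by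
    rw [Real.rpow_neg hB.le, hB1, hx2]
    have h1 : x ^ lam ≠ 0 := ne_of_gt (Real.rpow_pos_of_pos hx _)
    have h2 : y ^ lam ≠ 0 := ne_of_gt (Real.rpow_pos_of_pos hy _)
    have h3 : ((4:ℝ) / π ^ 2) ^ (lam + 1) ≠ 0 := ne_of_gt (by positivity)
    field_simp
  rw [key]
  apply mul_le_mul_of_nonneg_right _ (by positivity)
  apply mul_le_mul_of_nonneg_left _ (by positivity)
  have hxle : x ^ lam ≤ 2 ^ lam * y ^ lam := by
    rw [← Real.mul_rpow (by norm_num) hy.le]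
    exact Real.rpow_le_rpow hx.le hxy hlam.le
  calc x ^ lam * (y ^ lam)⁻¹ ≤ (2 ^ lam * y ^ lam) * (y ^ lam)⁻¹ :=
        mul_le_mul_of_nonneg_right hxle (by positivity)
    _ = 2 ^ lam := by
        field_simp

lemma case_two (hlam : 0 < lam) (ht : 0 < t) (hx : 0 < x) (hy : 0 < y) (hxy : 2 * y < x) :
    x * y * besselP (lam + 1) t x y * x ^ (2 * lam)
      ≤ ((2 * (lam + 1) / π) * (π ^ 2 / 4) * (π ^ (2 * lam) / (2 * lam)) * 4 ^ lam)
        * (t / ((x - y) ^ 2 + t ^ 2)) := by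
  set A := (x - y) ^ 2 + t ^ 2 with hAdef
  set B := 4 * x * y / π ^ 2 with hBdef
  have hA : 0 < A := by positivity
  have hB : 0 < B := by positivity
  have hP : besselP (lam + 1) t x y
      ≤ (2 * (lam + 1) * t / π) * (A ^ (-(lam + 1)) * B⁻¹ * (π ^ (2 * lam) / (2 * lam))) := by
    rw [besselP_eq]
    exact mul_le_mul_of_nonneg_left (inner_le_two hlam ht hx hy) (by positivity)
  have step1 : x * y * besselP (lam + 1) t x y * x ^ (2 * lam)
      ≤ x * y * ((2 * (lam + 1) * t / π)
          * (A ^ (-(lam + 1)) * B⁻¹ * (π ^ (2 * lam) / (2 * lam)))) * x ^ (2 * lam) := by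
    have hxl : (0:ℝ) ≤ x ^ (2 * lam) := Real.rpow_nonneg hx.le _
    have := mul_le_mul_of_nonneg_left hP (by positivity : (0:ℝ) ≤ x * y)
    exact mul_le_mul_of_nonneg_right this hxl
  refine step1.trans ?_
  have key : x * y * ((2 * (lam + 1) * t / π)
        * (A ^ (-(lam + 1)) * B⁻¹ * (π ^ (2 * lam) / (2 * lam)))) * x ^ (2 * lam)
      = (2 * (lam + 1) / π) * (π ^ 2 / 4) * (π ^ (2 * lam) / (2 * lam))
        * (x ^ (2 * lam) * A ^ (-(lam + 1))) * t := by
    rw [hBdef]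
    have hπ : (0:ℝ) < π := Real.pi_pos
    field_simp
  rw [key]
  have hbound : x ^ (2 * lam) * A ^ (-(lam + 1)) ≤ 4 ^ lam * A⁻¹ := by
    have hx2A : x ^ 2 ≤ 4 * A := by
      have h1 : x / 2 < x - y := by linarith
      nlinarith [sq_nonneg t]
    have h2 : x ^ (2 * lam) ≤ (4 * A) ^ lam := by
      have : x ^ (2 * lam) = (x ^ 2) ^ lam := by
        rw [← Real.rpow_natCast x 2, ← Real.rpow_mul hx.le]
        norm_num
      rw [this]
      exact Real.rpow_le_rpow (by positivity) hx2A hlam.le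
    have h3 : (4 * A) ^ lam = 4 ^ lam * A ^ lam :=
      Real.mul_rpow (by norm_num) hA.le
    have h4 : A ^ lam * A ^ (-(lam + 1)) = A⁻¹ := by
      rw [← Real.rpow_add hA]
      norm_num
      exact Real.rpow_neg_one A
    calc x ^ (2 * lam) * A ^ (-(lam + 1)) ≤ (4 * A) ^ lam * A ^ (-(lam + 1)) :=
          mul_le_mul_of_nonneg_right h2 (Real.rpow_nonneg hA.le _)
      _ = 4 ^ lam * (A ^ lam * A ^ (-(lam + 1))) := by rw [h3]; ring
      _ = 4 ^ lam * A⁻¹ := by rw [h4]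
  calc (2 * (lam + 1) / π) * (π ^ 2 / 4) * (π ^ (2 * lam) / (2 * lam))
        * (x ^ (2 * lam) * A ^ (-(lam + 1))) * t
      ≤ (2 * (lam + 1) / π) * (π ^ 2 / 4) * (π ^ (2 * lam) / (2 * lam))
        * (4 ^ lam * A⁻¹) * t := by
        have hc : (0:ℝ) ≤ (2 * (lam + 1) / π) * (π ^ 2 / 4) * (π ^ (2 * lam) / (2 * lam)) := by
          positivity
        exact mul_le_mul_of_nonneg_right
          (mul_le_mul_of_nonneg_left hbound hc) ht.le
    _ = ((2 * (lam + 1) / π) * (π ^ 2 / 4) * (π ^ (2 * lam) / (2 * lam)) * 4 ^ lam)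
        * (t / A) := by ring


end S2
end Helpers

/-- There is `C = C(λ)` with `∫₀^∞ x y P_t^{[λ+1]}(x,y) x^{2λ} dx ≤ C` for all `t, y > 0`. -/
theorem stmt11 (lam : ℝ) (hlam : 0 < lam) :
    ∃ C : ℝ, 0 < C ∧ ∀ t y : ℝ, 0 < t → 0 < y →
      ∫ x in Ioi (0 : ℝ), x * y * besselP (lam + 1) t x y * x ^ (2 * lam) ≤ C := by
  set K₁ : ℝ := (2 * (lam + 1) / π) * ((4 / π ^ 2) ^ (lam + 1))⁻¹ * 2 ^ lam with hK₁
  set K₂ : ℝ := (2 * (lam + 1) / π) * (π ^ 2 / 4) * (π ^ (2 * lam) / (2 * lam)) * 4 ^ lam with hK₂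
  have hπ : (0:ℝ) < π := Real.pi_pos
  have hK₁pos : 0 < K₁ := by rw [hK₁]; positivity
  have hK₂pos : 0 < K₂ := by rw [hK₂]; positivity
  refine ⟨(K₁ + K₂) * π, by positivity, ?_⟩
  intro t y ht hy
  have hK : (0:ℝ) ≤ K₁ + K₂ := by positivity
  have hpb : ∀ x ∈ Ioi (0:ℝ), x * y * besselP (lam + 1) t x y * x ^ (2 * lam)
      ≤ (K₁ + K₂) * (t / ((x - y) ^ 2 + t ^ 2)) := by
    intro x hx
    have hx0 : (0:ℝ) < x := hx
    have hA : (0:ℝ) < (x - y) ^ 2 + t ^ 2 := by positivity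
    have hq : (0:ℝ) ≤ t / ((x - y) ^ 2 + t ^ 2) := by positivity
    rcases le_or_gt x (2 * y) with hc | hc
    · exact (case_one hlam ht hx0 hy hc).trans
        (mul_le_mul_of_nonneg_right (le_add_of_nonneg_right hK₂pos.le) hq)
    · exact (case_two hlam ht hx0 hy hc).trans
        (mul_le_mul_of_nonneg_right (le_add_of_nonneg_left hK₁pos.le) hq)
  calc ∫ x in Ioi (0:ℝ), x * y * besselP (lam + 1) t x y * x ^ (2 * lam)
      ≤ ∫ x in Ioi (0:ℝ), (K₁ + K₂) * (t / ((x - y) ^ 2 + t ^ 2)) := by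
        apply integral_mono_of_nonneg
        · filter_upwards [ae_restrict_mem measurableSet_Ioi] with x hx
          have hx0 : (0:ℝ) < x := hx
          have hP := besselP_nonneg hlam ht hx0 hy
          have hxl : (0:ℝ) ≤ x ^ (2 * lam) := Real.rpow_nonneg hx0.le _
          exact mul_nonneg (mul_nonneg (mul_nonneg hx0.le hy.le) hP) hxl
        · exact ((poisson_integrable ht y).const_mul (K₁ + K₂)).integrableOn
        · filter_upwards [ae_restrict_mem measurableSet_Ioi] with x hx
          exact hpb x hx
    _ = (K₁ + K₂) * ∫ x in Ioi (0:ℝ), t / ((x - y) ^ 2 + t ^ 2) :=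
        MeasureTheory.integral_const_mul _ _
    _ ≤ (K₁ + K₂) * π := by
        apply mul_le_mul_of_nonneg_left _ hK
        calc ∫ x in Ioi (0:ℝ), t / ((x - y) ^ 2 + t ^ 2)
            ≤ ∫ x : ℝ, t / ((x - y) ^ 2 + t ^ 2) :=
              setIntegral_le_integral (poisson_integrable ht y)
                (ae_of_all _ fun x => by positivity)
          _ = π := poisson_integral ht y
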